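/- arXiv:1809.04252 — 3 statements merged into one kernel-verified Lean document; each statement's English description precedes it below -/
import Mathlib

section
/- If m > α and α < 1, then with σ(t) = ∫_0^t m ζ_λ(s)^{m-1} ds and η(τ) = ζ_λ(t(τ)) where t(τ) is the inverse of σ, one has η(τ) ~ c_m τ^{1/(m-α)} as τ→∞ for some constant c_m > 0 (explicitly c_m = ((m-α)/m)^{1/(m-α)}). -/
open Filter

noncomputable def zeta (α μ : ℝ) (t : ℝ) : ℝ :=
  (μ ^ (1 - α) + (1 - α) * t) ^ (1 / (1 - α))

noncomputable def sigma' (m α lam : ℝ) (t : ℝ) : ℝ :=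
  ∫ s in (0:ℝ)..t, m * (zeta α lam s) ^ (m - 1)

lemma sigma'_eq (m α lam : ℝ) (hm : 0 < m) (hα : α < 1) (hmα : α < m) (hlam : 0 < lam)
    {t : ℝ} (ht : 0 ≤ t) :
    sigma' m α lam t = m / (m - α) *
      ((lam ^ (1 - α) + (1 - α) * t) ^ ((m - α) / (1 - α)) - lam ^ (m - α)) := by
  have h1α : 0 < 1 - α := by linarith
  have hmα' : 0 < m - α := by linarith
  set A := lam ^ (1 - α) with hA
  have hApos : 0 < A := Real.rpow_pos_of_pos hlam _
  have hbase : ∀ s ∈ Set.uIcc (0:ℝ) t, 0 < A + (1 - α) * s := by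
    intro s hs
    rw [Set.uIcc_of_le ht] at hs
    nlinarith [hs.1]
  have key : ∀ s ∈ Set.uIcc (0:ℝ) t,
      HasDerivAt (fun u => m / (m - α) * (A + (1 - α) * u) ^ ((m - α) / (1 - α)))
        (m * zeta α lam s ^ (m - 1)) s := by
    intro s hs
    have hb := hbase s hs
    have hlin : HasDerivAt (fun u : ℝ => A + (1 - α) * u) (1 - α) s := by
      simpa using ((hasDerivAt_id s).const_mul (1 - α)).const_add A
    have hr := (hlin.rpow_const (p := (m - α) / (1 - α)) (Or.inl hb.ne')).const_mul
      (m / (m - α))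
    refine hr.congr_deriv ?_
    have hzeq : zeta α lam s ^ (m - 1) = (A + (1 - α) * s) ^ ((m - 1) / (1 - α)) := by
      rw [zeta, ← Real.rpow_mul hb.le]
      congr 1
      field_simp
    rw [hzeq]
    have hexp : (m - α) / (1 - α) - 1 = (m - 1) / (1 - α) := by
      field_simp
      ring
    rw [hexp]
    field_simp
  have hcont : ContinuousOn (fun s => m * zeta α lam s ^ (m - 1)) (Set.uIcc (0:ℝ) t) := by
    have hz : Continuous (zeta α lam) := by
      apply Continuous.rpow_const
      · exact continuous_const.add (continuous_const.mul continuous_id)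
      · intro x; right; positivity
    apply ContinuousOn.mul continuousOn_const
    apply ContinuousOn.rpow_const hz.continuousOn
    intro s hs
    left
    exact (Real.rpow_pos_of_pos (hbase s hs) _).ne'
  have hFTC := intervalIntegral.integral_eq_sub_of_hasDerivAt key
    (hcont.intervalIntegrable)
  rw [sigma', hFTC]
  have hA0 : A ^ ((m - α) / (1 - α)) = lam ^ (m - α) := by
    rw [hA, ← Real.rpow_mul hlam.le]
    congr 1
    field_simp
  simp [hA0]
  ring

theorem stmt_5 (m α lam : ℝ) (hm : 0 < m) (hα : α < 1) (hmα : α < m) (hlam : 0 < lam)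
    (tinv : ℝ → ℝ) (htinv0 : ∀ τ ≥ (0:ℝ), 0 ≤ tinv τ)
    (htinv : ∀ τ ≥ (0:ℝ), sigma' m α lam (tinv τ) = τ) :
    Tendsto (fun τ : ℝ =>
        zeta α lam (tinv τ) / (((m - α) / m) ^ (1 / (m - α)) * τ ^ (1 / (m - α))))
      atTop (nhds 1) := by
  have h1α : 0 < 1 - α := by linarith
  have hmα' : 0 < m - α := by linarith
  set c : ℝ := (m - α) / m with hc
  set L : ℝ := lam ^ (m - α) with hL
  set e : ℝ := 1 / (m - α) with he
  have hcpos : 0 < c := by positivity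
  have hLpos : 0 < L := Real.rpow_pos_of_pos hlam _
  have hzeta : ∀ τ ≥ (0:ℝ), zeta α lam (tinv τ) = (c * τ + L) ^ e := by
    intro τ hτ
    have ht0 := htinv0 τ hτ
    have hs := htinv τ hτ
    rw [sigma'_eq m α lam hm hα hmα hlam ht0] at hs
    set X : ℝ := lam ^ (1 - α) + (1 - α) * tinv τ with hX
    have hXpos : 0 < X := by
      have : 0 < lam ^ (1 - α) := Real.rpow_pos_of_pos hlam _
      nlinarith
    have hXq : X ^ ((m - α) / (1 - α)) = c * τ + L := by
      have : m / (m - α) ≠ 0 := by positivity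
      field_simp [hc, hL] at hs ⊢
      rw [hc, hL]; field_simp; linear_combination hs
    have : zeta α lam (tinv τ) = (X ^ ((m - α) / (1 - α))) ^ e := by
      rw [zeta, ← Real.rpow_mul hXpos.le]
      congr 1
      rw [he]
      field_simp
    rw [this, hXq]
  have hratio : ∀ τ > (0:ℝ),
      zeta α lam (tinv τ) / (c ^ e * τ ^ e) = (1 + L / c / τ) ^ e := by
    intro τ hτ
    rw [hzeta τ hτ.le, ← Real.mul_rpow hcpos.le hτ.le,
      ← Real.div_rpow (by positivity) (by positivity)]
    congr 1
    field_simp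
  have h0 : Tendsto (fun τ : ℝ => 1 + L / c / τ) atTop (nhds 1) := by
    have h2 : Tendsto (fun τ : ℝ => (L / c) / τ) atTop (nhds 0) :=
      tendsto_const_nhds.div_atTop tendsto_id
    simpa using tendsto_const_nhds.add h2
  have hcontr : ContinuousAt (fun x : ℝ => x ^ e) 1 :=
    Real.continuousAt_rpow_const 1 e (Or.inl one_ne_zero)
  have h1 : Tendsto (fun τ : ℝ => (1 + L / c / τ) ^ e) atTop (nhds 1) := by
    have := hcontr.tendsto.comp h0
    simpa [Real.one_rpow, Function.comp_def] using this
  apply h1.congr'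
  filter_upwards [eventually_gt_atTop (0:ℝ)] with τ hτ
  exact (hratio τ hτ).symm
end

section
/- For every K ≥ 0 and δ > 0 there is C > 0 such that for all φ ∈ L^1(ℝ^N, (1+|x|^K)dx) and t > 0, ∫ |e^{tΔ}φ|(x)(1+|x|^K) dx ≤ (1+δ) ∫ |φ(x)|(1+|x|^K) dx + C(1 + t^{K/2})‖φ‖_{L^1}. -/
open Real MeasureTheory ENNReal

noncomputable def heatK (N : ℕ) (x : EuclideanSpace ℝ (Fin N)) (t : ℝ) : ℝ :=
  (4 * π * t) ^ (-(N : ℝ) / 2) * Real.exp (-‖x‖ ^ 2 / (4 * t))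

variable {N : ℕ}

lemma heatK_pos {t : ℝ} (ht : 0 < t) (x : EuclideanSpace ℝ (Fin N)) : 0 < heatK N x t := by
  unfold heatK
  have := Real.pi_pos
  positivity

lemma heatK_continuous (t : ℝ) : Continuous fun x : EuclideanSpace ℝ (Fin N) => heatK N x t := by
  unfold heatK
  fun_prop

lemma heatK_eq {t : ℝ} (ht : 0 < t) (z : EuclideanSpace ℝ (Fin N)) :
    heatK N z t = (4 * π * t) ^ (-(N : ℝ) / 2) * Real.exp (-(4 * t)⁻¹ * ‖z‖ ^ 2) := by
  unfold heatK
  rw [show -‖z‖ ^ 2 / (4 * t) = -(4 * t)⁻¹ * ‖z‖ ^ 2 by ring]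

lemma integrable_gauss {b : ℝ} (hb : 0 < b) :
    Integrable fun v : EuclideanSpace ℝ (Fin N) => Real.exp (-b * ‖v‖ ^ 2) := by
  have h := (GaussianFourier.integrable_cexp_neg_mul_sq_norm_add
      (V := EuclideanSpace ℝ (Fin N)) (b := (b : ℂ)) (by simpa using hb) 0 0).norm
  simpa [Complex.norm_exp, ← Complex.ofReal_pow] using h

lemma heatK_integrable {t : ℝ} (ht : 0 < t) :
    Integrable fun z : EuclideanSpace ℝ (Fin N) => heatK N z t := by
  have hb : (0:ℝ) < (4 * t)⁻¹ := by positivity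
  have h := (integrable_gauss (N := N) hb).const_mul ((4 * π * t) ^ (-(N : ℝ) / 2))
  exact h.congr (Filter.Eventually.of_forall fun z => (heatK_eq ht z).symm)

lemma heatK_integral {t : ℝ} (ht : 0 < t) :
    ∫ z : EuclideanSpace ℝ (Fin N), heatK N z t = 1 := by
  have hb : (0:ℝ) < (4 * t)⁻¹ := by positivity
  have h4 : (0:ℝ) < 4 * π * t := by have := Real.pi_pos; positivity
  simp_rw [heatK_eq ht]
  rw [integral_const_mul, GaussianFourier.integral_rexp_neg_mul_sq_norm hb]
  rw [finrank_euclideanSpace_fin,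
    show π / (4 * t)⁻¹ = 4 * π * t by field_simp,
    ← Real.rpow_add h4, show (-(N:ℝ)/2 + N/2) = 0 by ring, Real.rpow_zero]

lemma heatK_scale {t K : ℝ} (ht : 0 < t) (hK : 0 ≤ K) (z : EuclideanSpace ℝ (Fin N)) :
    heatK N z t * ‖z‖ ^ K
      = (t ^ (-(N:ℝ)/2) * t ^ (K/2)) *
        (heatK N ((Real.sqrt t)⁻¹ • z) 1 * ‖(Real.sqrt t)⁻¹ • z‖ ^ K) := by
  have hst : (0:ℝ) < Real.sqrt t := Real.sqrt_pos.2 ht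
  have hc : (Real.sqrt t)⁻¹ = t ^ (-(1:ℝ)/2) := by
    rw [Real.sqrt_eq_rpow, ← Real.rpow_neg ht.le]
    norm_num
  have hns : ‖(Real.sqrt t)⁻¹ • z‖ = (Real.sqrt t)⁻¹ * ‖z‖ := by
    rw [norm_smul, Real.norm_eq_abs, abs_of_pos (by positivity)]
  have hn2 : ‖(Real.sqrt t)⁻¹ • z‖ ^ 2 = t⁻¹ * ‖z‖ ^ 2 := by
    rw [hns, mul_pow, ← Real.sqrt_inv, Real.sq_sqrt (by positivity)]
  have hpow : (t ^ (-(1:ℝ)/2)) ^ K = (t ^ (K/2))⁻¹ := by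
    rw [← Real.rpow_mul ht.le, show (-(1:ℝ)/2*K) = -(K/2) by ring, Real.rpow_neg ht.le]
  have hrK : ‖(Real.sqrt t)⁻¹ • z‖ ^ K = (t ^ (K/2))⁻¹ * ‖z‖ ^ K := by
    rw [hns, Real.mul_rpow (by positivity) (norm_nonneg z), hc, hpow]
  have hb : (0:ℝ) < 4 * π := by have := Real.pi_pos; positivity
  unfold heatK
  rw [hrK, hn2, mul_one,
    show (4:ℝ) * π * t = (4 * π) * t by ring,
    Real.mul_rpow hb.le ht.le,
    show -(t⁻¹ * ‖z‖ ^ 2) / (4*1) = -‖z‖ ^ 2 / (4 * t) by rw [mul_one, div_eq_div_iff (by norm_num) (by positivity)]; field_simp]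
  have hw : t ^ (K/2) ≠ 0 := (Real.rpow_pos_of_pos ht _).ne'
  field_simp

lemma rpow_mul_exp_le {K : ℝ} (hK : 0 ≤ K) (r : ℝ) (hr : 0 ≤ r) :
    r ^ K * Real.exp (-r ^ 2 / 4) ≤ Real.exp (2 * K ^ 2) * Real.exp (-(1/8) * r ^ 2) := by
  rcases eq_or_lt_of_le hr with h0 | h0
  · have h1 : (0:ℝ) ^ K ≤ 1 := by
      rcases eq_or_lt_of_le hK with hK0 | hK0
      · rw [← hK0, Real.rpow_zero]
      · rw [Real.zero_rpow hK0.ne']; norm_num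
    have h2 : (1:ℝ) ≤ Real.exp (2 * K ^ 2) := by
      rw [← Real.exp_zero]; exact Real.exp_le_exp.2 (by positivity)
    rw [← h0, show (-(0:ℝ) ^ 2 / 4) = 0 by norm_num,
      show (-(1/8:ℝ) * 0 ^ 2) = 0 by norm_num, Real.exp_zero, mul_one, mul_one]
    exact h1.trans h2
  · have hlog : Real.log r ≤ r := by
      have := Real.log_le_sub_one_of_pos h0; linarith
    rw [Real.rpow_def_of_pos h0, ← Real.exp_add, ← Real.exp_add]
    apply Real.exp_le_exp.2
    nlinarith [sq_nonneg (r - 4 * K), mul_le_mul_of_nonneg_left hlog hK]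

lemma g_integrable {K : ℝ} (hK : 0 ≤ K) :
    Integrable (fun z : EuclideanSpace ℝ (Fin N) => heatK N z 1 * ‖z‖ ^ K) := by
  have hmaj : Integrable (fun z : EuclideanSpace ℝ (Fin N) =>
      (4 * π * 1) ^ (-(N:ℝ)/2) * (Real.exp (2 * K ^ 2) * Real.exp (-(1/8) * ‖z‖ ^ 2))) := by
    exact ((integrable_gauss (N := N) (b := 1/8) (by norm_num)).const_mul _).const_mul _
  apply hmaj.mono
  · exact ((heatK_continuous 1).mul
      (continuous_norm.rpow_const fun x => Or.inr hK)).aestronglyMeasurable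
  · refine Filter.Eventually.of_forall fun z => ?_
    have hpos : (0:ℝ) < (4 * π * 1) ^ (-(N:ℝ)/2) := by
      have := Real.pi_pos; positivity
    have h1 := rpow_mul_exp_le hK ‖z‖ (norm_nonneg z)
    rw [Real.norm_eq_abs, Real.norm_eq_abs, abs_of_nonneg, abs_of_nonneg]
    · unfold heatK
      calc (4 * π * 1) ^ (-(N:ℝ)/2) * Real.exp (-‖z‖ ^ 2 / (4*1)) * ‖z‖ ^ K
          = (4 * π * 1) ^ (-(N:ℝ)/2) * (‖z‖ ^ K * Real.exp (-‖z‖ ^ 2 / 4)) := by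
            rw [show (4:ℝ)*1 = 4 by norm_num]; ring
        _ ≤ _ := by
            exact mul_le_mul_of_nonneg_left h1 hpos.le
    · positivity
    · have := heatK_pos (N := N) one_pos z
      positivity

lemma heatK_mom_integrable {t K : ℝ} (ht : 0 < t) (hK : 0 ≤ K) :
    Integrable (fun z : EuclideanSpace ℝ (Fin N) => heatK N z t * ‖z‖ ^ K) := by
  have hst : Real.sqrt t ≠ 0 := (Real.sqrt_pos.2 ht).ne'
  have h := (((g_integrable (N := N) hK).comp_smul (R := (Real.sqrt t)⁻¹)
      (inv_ne_zero hst)).const_mul (t ^ (-(N:ℝ)/2) * t ^ (K/2)))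
  exact h.congr (Filter.Eventually.of_forall fun z => (heatK_scale ht hK z).symm)

lemma heatK_mom_integral {t K : ℝ} (ht : 0 < t) (hK : 0 ≤ K) :
    ∫ z : EuclideanSpace ℝ (Fin N), heatK N z t * ‖z‖ ^ K
      = t ^ (K/2) * ∫ z : EuclideanSpace ℝ (Fin N), heatK N z 1 * ‖z‖ ^ K := by
  simp_rw [heatK_scale ht hK]
  rw [integral_const_mul,
    Measure.integral_comp_inv_smul_of_nonneg volume
      (fun z : EuclideanSpace ℝ (Fin N) => heatK N z 1 * ‖z‖ ^ K) (Real.sqrt_nonneg t),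
    finrank_euclideanSpace_fin, smul_eq_mul]
  have hsq : (Real.sqrt t) ^ N = t ^ ((N:ℝ)/2) := by
    rw [Real.sqrt_eq_rpow, ← Real.rpow_natCast (t ^ ((1:ℝ)/2)) N, ← Real.rpow_mul ht.le]
    congr 1
    ring
  have h1 : t ^ (-(N:ℝ)/2) * t ^ ((N:ℝ)/2) = 1 := by
    rw [← Real.rpow_add ht, show (-(N:ℝ)/2 + N/2) = 0 by ring, Real.rpow_zero]
  rw [hsq]
  linear_combination (t ^ (K/2) * ∫ z : EuclideanSpace ℝ (Fin N), heatK N z 1 * ‖z‖ ^ K) * h1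

lemma lint_heatK {t : ℝ} (ht : 0 < t) :
    ∫⁻ z : EuclideanSpace ℝ (Fin N), ENNReal.ofReal (heatK N z t) = 1 := by
  rw [← ofReal_integral_eq_lintegral_ofReal (heatK_integrable ht)
    (Filter.Eventually.of_forall fun z => (heatK_pos ht z).le), heatK_integral ht, ofReal_one]

lemma lint_heatK_mom {t K : ℝ} (ht : 0 < t) (hK : 0 ≤ K) :
    ∫⁻ z : EuclideanSpace ℝ (Fin N), ENNReal.ofReal (heatK N z t * ‖z‖ ^ K)
      = ENNReal.ofReal (t ^ (K/2) * ∫ z : EuclideanSpace ℝ (Fin N), heatK N z 1 * ‖z‖ ^ K) := by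
  rw [← heatK_mom_integral ht hK,
    ← ofReal_integral_eq_lintegral_ofReal (heatK_mom_integrable ht hK)
      (Filter.Eventually.of_forall fun z =>
        mul_nonneg (heatK_pos ht z).le (Real.rpow_nonneg (norm_nonneg z) K))]

lemma rpow_add_le_eps {K δ : ℝ} (hK : 0 ≤ K) (hδ : 0 < δ) :
    ∃ B : ℝ, 1 ≤ B ∧ ∀ a b : ℝ, 0 ≤ a → 0 ≤ b →
      (a + b) ^ K ≤ (1 + δ) * a ^ K + B * b ^ K := by
  set η := Real.log (1 + δ) / (K + 1) with hη
  have hδ1 : (0:ℝ) < 1 + δ := by linarith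
  have hlog : 0 < Real.log (1 + δ) := Real.log_pos (by linarith)
  have hηpos : 0 < η := div_pos hlog (by linarith)
  have hB1 : (1:ℝ) ≤ (1 + η⁻¹) ^ K :=
    Real.one_le_rpow (by nlinarith [inv_pos.2 hηpos]) hK
  refine ⟨(1 + η⁻¹) ^ K, hB1, fun a b ha hb => ?_⟩
  have key : (1 + η) ^ K ≤ 1 + δ := by
    rw [Real.rpow_def_of_pos (by positivity), ← Real.exp_log hδ1]
    apply Real.exp_le_exp.2
    have h1 : Real.log (1 + η) ≤ η := by
      have := Real.log_le_sub_one_of_pos (show (0:ℝ) < 1 + η by positivity)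
      linarith
    have h2 : Real.log (1 + η) * K ≤ η * K :=
      mul_le_mul_of_nonneg_right h1 hK
    have h3 : η * K ≤ Real.log (1 + δ) := by
      rw [hη, div_mul_eq_mul_div, div_le_iff₀ (by linarith)]
      nlinarith
    linarith
  rcases le_or_gt b (η * a) with hc | hc
  · have h2 : (a + b) ^ K ≤ ((1 + η) * a) ^ K :=
      Real.rpow_le_rpow (by linarith) (by nlinarith) hK
    rw [Real.mul_rpow (by positivity) ha] at h2
    have h3 : (1 + η) ^ K * a ^ K ≤ (1 + δ) * a ^ K :=
      mul_le_mul_of_nonneg_right key (Real.rpow_nonneg ha K)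
    have h4 : 0 ≤ (1 + η⁻¹) ^ K * b ^ K :=
      mul_nonneg (by linarith) (Real.rpow_nonneg hb K)
    linarith
  · have hab : a + b ≤ (1 + η⁻¹) * b := by
      have h5 : a ≤ η⁻¹ * b := by
        rw [← mul_le_mul_iff_right₀ hηpos, ← mul_assoc, mul_inv_cancel₀ hηpos.ne', one_mul]
        exact hc.le
      nlinarith
    have h2 : (a + b) ^ K ≤ ((1 + η⁻¹) * b) ^ K :=
      Real.rpow_le_rpow (by linarith) hab hK
    rw [Real.mul_rpow (by positivity) hb] at h2
    have h3 : 0 ≤ (1 + δ) * a ^ K :=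
      mul_nonneg hδ1.le (Real.rpow_nonneg ha K)
    linarith

noncomputable def heatSg (N : ℕ) (t : ℝ) (φ : EuclideanSpace ℝ (Fin N) → ℝ) :
    EuclideanSpace ℝ (Fin N) → ℝ :=
  fun x => ∫ y, heatK N (x - y) t * φ y

theorem stmt_11 (N : ℕ) (hN : 1 ≤ N) (K δ : ℝ) (hK : 0 ≤ K) (hδ : 0 < δ) :
    ∃ C > (0:ℝ), ∀ φ : EuclideanSpace ℝ (Fin N) → ℝ,
      Integrable (fun x => |φ x| * (1 + ‖x‖ ^ K)) volume → ∀ t : ℝ, 0 < t →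
        (∫ x, |heatSg N t φ x| * (1 + ‖x‖ ^ K)) ≤
          (1 + δ) * (∫ x, |φ x| * (1 + ‖x‖ ^ K)) +
            C * (1 + t ^ (K / 2)) * (∫ x, |φ x|) := by
  classical
  obtain ⟨B, hB1, hBle⟩ := rpow_add_le_eps hK hδ
  set M := ∫ z : EuclideanSpace ℝ (Fin N), heatK N z 1 * ‖z‖ ^ K with hM
  have hM0 : 0 ≤ M := integral_nonneg fun z =>
    mul_nonneg (heatK_pos one_pos z).le (Real.rpow_nonneg (norm_nonneg z) K)
  refine ⟨B * (M + 1), by nlinarith, fun φ hφ t ht => ?_⟩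
  have hCpos : (0:ℝ) < B * (M + 1) := by nlinarith
  have hw1 : ∀ x : EuclideanSpace ℝ (Fin N), (1:ℝ) ≤ 1 + ‖x‖ ^ K := fun x =>
    le_add_of_nonneg_right (Real.rpow_nonneg (norm_nonneg x) K)
  have htK : 0 ≤ t ^ (K/2) := Real.rpow_nonneg ht.le _
  have hCt : B * (t ^ (K/2) * M) ≤ (B * (M + 1)) * (1 + t ^ (K/2)) := by nlinarith
  -- measurability of |φ|
  have hwcont : Continuous fun x : EuclideanSpace ℝ (Fin N) => (1 + ‖x‖ ^ K) :=
    continuous_const.add (continuous_norm.rpow_const fun x => Or.inr hK)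
  have hwne : ∀ x : EuclideanSpace ℝ (Fin N), (1 + ‖x‖ ^ K) ≠ 0 := fun x => by
    have := hw1 x; linarith
  have hφm : AEStronglyMeasurable (fun x : EuclideanSpace ℝ (Fin N) => |φ x|) volume := by
    have h1 := hφ.aestronglyMeasurable.mul (hwcont.inv₀ hwne).aestronglyMeasurable
    exact h1.congr (Filter.Eventually.of_forall fun x =>
      mul_inv_cancel_right₀ (hwne x) _)
  have hφ1 : Integrable (fun x : EuclideanSpace ℝ (Fin N) => |φ x|) volume := by
    refine hφ.mono hφm (Filter.Eventually.of_forall fun x => ?_)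
    rw [Real.norm_eq_abs, Real.norm_eq_abs, abs_abs, abs_mul, abs_abs,
      abs_of_nonneg (by positivity : (0:ℝ) ≤ 1 + ‖x‖ ^ K)]
    exact le_mul_of_one_le_right (abs_nonneg _) (hw1 x)
  have hA1 : 0 ≤ ∫ x, |φ x| * (1 + ‖x‖ ^ K) :=
    integral_nonneg fun x => mul_nonneg (abs_nonneg _) (by positivity)
  have hA0 : 0 ≤ ∫ x, |φ x| := integral_nonneg fun x => abs_nonneg _
  -- measurable representative of ofReal |φ|
  have hφae : AEMeasurable (fun y : EuclideanSpace ℝ (Fin N) => ENNReal.ofReal |φ y|) volume :=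
    ENNReal.measurable_ofReal.comp_aemeasurable hφm.aemeasurable
  set ψ := hφae.mk _ with hψdef
  have hψm : Measurable ψ := hφae.measurable_mk
  have hψe : (fun y : EuclideanSpace ℝ (Fin N) => ENNReal.ofReal |φ y|) =ᵐ[volume] ψ :=
    hφae.ae_eq_mk
  set G : EuclideanSpace ℝ (Fin N) → ℝ≥0∞ := fun z => ENNReal.ofReal (heatK N z t) with hGdef
  set W : EuclideanSpace ℝ (Fin N) → ℝ≥0∞ := fun x => ENNReal.ofReal (1 + ‖x‖ ^ K) with hWdef
  have hGm : Measurable G := (ENNReal.continuous_ofReal.comp (heatK_continuous t)).measurable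
  have hWm : Measurable W := (ENNReal.continuous_ofReal.comp hwcont).measurable
  have step1 : ∀ x, ENNReal.ofReal (|heatSg N t φ x| * (1 + ‖x‖ ^ K))
      ≤ (∫⁻ y, G (x - y) * ψ y) * W x := by
    intro x
    rw [ENNReal.ofReal_mul (abs_nonneg _)]
    refine mul_le_mul_left ?_ _
    calc ENNReal.ofReal |heatSg N t φ x| = (‖heatSg N t φ x‖₊ : ℝ≥0∞) := by
          rw [← Real.norm_eq_abs, ofReal_norm, enorm_eq_nnnorm]
      _ ≤ ∫⁻ y, ‖heatK N (x - y) t * φ y‖₊ :=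
          enorm_integral_le_lintegral_enorm _
      _ = ∫⁻ y, G (x - y) * ENNReal.ofReal |φ y| := by
          refine lintegral_congr fun y => ?_
          rw [← enorm_eq_nnnorm, ← ofReal_norm, Real.norm_eq_abs, abs_mul,
            abs_of_pos (heatK_pos ht _), ENNReal.ofReal_mul (heatK_pos ht _).le]
      _ = ∫⁻ y, G (x - y) * ψ y :=
          lintegral_congr_ae (hψe.mono fun y hy => congrArg (fun r => G (x - y) * r) hy)
  have swap : ∫⁻ x, (∫⁻ y, G (x - y) * ψ y) * W x
      = ∫⁻ y, ∫⁻ x, G (x - y) * ψ y * W x := by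
    have h1 : ∀ x, (∫⁻ y, G (x - y) * ψ y) * W x = ∫⁻ y, G (x - y) * ψ y * W x := fun x =>
      (lintegral_mul_const' _ _ ENNReal.ofReal_ne_top).symm
    simp_rw [h1]
    exact lintegral_lintegral_swap
      ((((hGm.comp (measurable_fst.sub measurable_snd)).mul
        (hψm.comp measurable_snd)).mul (hWm.comp measurable_fst)).aemeasurable)
  have hstep : ∫⁻ y, ∫⁻ x, G (x - y) * ψ y * W x
      = ∫⁻ y, ENNReal.ofReal |φ y| * ∫⁻ x, G (x - y) * W x := by
    refine lintegral_congr_ae (hψe.mono fun y hy => ?_)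
    dsimp only
    rw [← show ENNReal.ofReal |φ y| = ψ y from hy,
      ← lintegral_const_mul' _ _ ENNReal.ofReal_ne_top]
    exact lintegral_congr fun x => by ring
  have hinner : ∀ y : EuclideanSpace ℝ (Fin N), ∫⁻ x, G (x - y) * W x
      ≤ ENNReal.ofReal ((1 + δ) * (1 + ‖y‖ ^ K))
        + ENNReal.ofReal ((B * (M + 1)) * (1 + t ^ (K/2))) := by
    intro y
    have htr : ∫⁻ x, G (x - y) * W x = ∫⁻ z, G z * W (z + y) := by
      rw [← lintegral_sub_right_eq_self (fun z => G z * W (z + y)) y]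
      exact lintegral_congr fun x => by rw [sub_add_cancel]
    rw [htr]
    calc ∫⁻ z, G z * W (z + y)
        ≤ ∫⁻ z, (ENNReal.ofReal (heatK N z t * ((1 + δ) * (1 + ‖y‖ ^ K)))
            + ENNReal.ofReal (heatK N z t * (B * ‖z‖ ^ K))) := by
          refine lintegral_mono fun z => ?_
          have h1 : ‖z + y‖ ^ K ≤ (‖y‖ + ‖z‖) ^ K :=
            Real.rpow_le_rpow (norm_nonneg _)
              (by rw [add_comm ‖y‖]; exact norm_add_le z y) hK
          have h2 := hBle ‖y‖ ‖z‖ (norm_nonneg y) (norm_nonneg z)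
          have h3 : 0 ≤ ‖y‖ ^ K := Real.rpow_nonneg (norm_nonneg y) K
          have hkey : 1 + ‖z + y‖ ^ K ≤ (1 + δ) * (1 + ‖y‖ ^ K) + B * ‖z‖ ^ K := by
            nlinarith
          have heq : G z * W (z + y) = ENNReal.ofReal (heatK N z t * (1 + ‖z + y‖ ^ K)) := by
            rw [hGdef, hWdef, ← ENNReal.ofReal_mul (heatK_pos ht z).le]
          rw [heq, ← ENNReal.ofReal_add
            (mul_nonneg (heatK_pos ht z).le (by positivity))
            (mul_nonneg (heatK_pos ht z).le
              (mul_nonneg (by linarith) (Real.rpow_nonneg (norm_nonneg z) K))),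
            ← mul_add]
          exact ENNReal.ofReal_le_ofReal
            (mul_le_mul_of_nonneg_left hkey (heatK_pos ht z).le)
      _ = (∫⁻ z, ENNReal.ofReal (heatK N z t * ((1 + δ) * (1 + ‖y‖ ^ K))))
            + ∫⁻ z, ENNReal.ofReal (heatK N z t * (B * ‖z‖ ^ K)) := by
          refine lintegral_add_left ?_ _
          exact (ENNReal.continuous_ofReal.comp
            ((heatK_continuous t).mul continuous_const)).measurable
      _ ≤ ENNReal.ofReal ((1 + δ) * (1 + ‖y‖ ^ K))
            + ENNReal.ofReal ((B * (M + 1)) * (1 + t ^ (K/2))) := by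
          refine add_le_add ?_ ?_
          · have : ∀ z : EuclideanSpace ℝ (Fin N),
                ENNReal.ofReal (heatK N z t * ((1 + δ) * (1 + ‖y‖ ^ K)))
                  = ENNReal.ofReal (heatK N z t) * ENNReal.ofReal ((1 + δ) * (1 + ‖y‖ ^ K)) :=
              fun z => ENNReal.ofReal_mul (heatK_pos ht z).le
            simp_rw [this]
            rw [lintegral_mul_const' _ _ ENNReal.ofReal_ne_top, lint_heatK ht, one_mul]
          · have : ∀ z : EuclideanSpace ℝ (Fin N),
                ENNReal.ofReal (heatK N z t * (B * ‖z‖ ^ K))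
                  = ENNReal.ofReal B * ENNReal.ofReal (heatK N z t * ‖z‖ ^ K) := by
              intro z
              rw [← ENNReal.ofReal_mul (by linarith : (0:ℝ) ≤ B)]
              congr 1
              ring
            simp_rw [this]
            rw [lintegral_const_mul' _ _ ENNReal.ofReal_ne_top, lint_heatK_mom ht hK, ← hM,
              ← ENNReal.ofReal_mul (by linarith : (0:ℝ) ≤ B)]
            exact ENNReal.ofReal_le_ofReal hCt
  have big : ∫⁻ x, ENNReal.ofReal (|heatSg N t φ x| * (1 + ‖x‖ ^ K))
      ≤ ENNReal.ofReal ((1 + δ) * (∫ x, |φ x| * (1 + ‖x‖ ^ K))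
          + (B * (M + 1)) * (1 + t ^ (K/2)) * (∫ x, |φ x|)) := by
    calc ∫⁻ x, ENNReal.ofReal (|heatSg N t φ x| * (1 + ‖x‖ ^ K))
        ≤ ∫⁻ x, (∫⁻ y, G (x - y) * ψ y) * W x := lintegral_mono step1
      _ = ∫⁻ y, ENNReal.ofReal |φ y| * ∫⁻ x, G (x - y) * W x := swap.trans hstep
      _ ≤ ∫⁻ y, ENNReal.ofReal |φ y| * (ENNReal.ofReal ((1 + δ) * (1 + ‖y‖ ^ K))
            + ENNReal.ofReal ((B * (M + 1)) * (1 + t ^ (K/2)))) :=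
          lintegral_mono fun y => mul_le_mul_right (hinner y) _
      _ = (∫⁻ y, ENNReal.ofReal ((1 + δ) * (|φ y| * (1 + ‖y‖ ^ K))))
            + ∫⁻ y, ENNReal.ofReal ((B * (M + 1)) * (1 + t ^ (K/2)) * |φ y|) := by
          have hpt : ∀ y : EuclideanSpace ℝ (Fin N),
              ENNReal.ofReal |φ y| * (ENNReal.ofReal ((1 + δ) * (1 + ‖y‖ ^ K))
                + ENNReal.ofReal ((B * (M + 1)) * (1 + t ^ (K/2))))
              = ENNReal.ofReal ((1 + δ) * (|φ y| * (1 + ‖y‖ ^ K)))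
                + ENNReal.ofReal ((B * (M + 1)) * (1 + t ^ (K/2)) * |φ y|) := by
            intro y
            rw [mul_add, ← ENNReal.ofReal_mul (abs_nonneg _), ← ENNReal.ofReal_mul (abs_nonneg _)]
            congr 1 <;> [skip; skip] <;> congr 1 <;> ring
          simp_rw [hpt]
          refine lintegral_add_left' ?_ _
          exact ENNReal.measurable_ofReal.comp_aemeasurable
            ((hφ.const_mul (1 + δ)).aestronglyMeasurable.aemeasurable)
      _ = ENNReal.ofReal ((1 + δ) * ∫ x, |φ x| * (1 + ‖x‖ ^ K))
            + ENNReal.ofReal ((B * (M + 1)) * (1 + t ^ (K/2)) * ∫ x, |φ x|) := by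
          rw [← ofReal_integral_eq_lintegral_ofReal (hφ.const_mul (1 + δ))
              (Filter.Eventually.of_forall fun x =>
                mul_nonneg (by linarith) (mul_nonneg (abs_nonneg _) (by positivity))),
            ← ofReal_integral_eq_lintegral_ofReal (hφ1.const_mul _)
              (Filter.Eventually.of_forall fun x =>
                mul_nonneg (mul_nonneg hCpos.le (by positivity)) (abs_nonneg _)),
            integral_const_mul, integral_const_mul]
      _ = _ := by
          rw [← ENNReal.ofReal_add (mul_nonneg (by linarith) hA1)
            (mul_nonneg (mul_nonneg hCpos.le (by positivity)) hA0)]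
  by_cases hint : Integrable (fun x => |heatSg N t φ x| * (1 + ‖x‖ ^ K)) volume
  · rw [integral_eq_lintegral_of_nonneg_ae
      (Filter.Eventually.of_forall fun x => mul_nonneg (abs_nonneg _) (by positivity))
      hint.aestronglyMeasurable]
    exact ENNReal.toReal_le_of_le_ofReal
      (add_nonneg (mul_nonneg (by linarith) hA1)
        (mul_nonneg (mul_nonneg hCpos.le (by positivity)) hA0)) big
  · rw [integral_undef hint]
    exact add_nonneg (mul_nonneg (by linarith) hA1)
      (mul_nonneg (mul_nonneg hCpos.le (by positivity)) hA0)
end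

section
/- Let f ∈ L^1(ℝ^N, (1+|x|^K)dx) and define m_ν(f,t) inductively by m_0(f,t) = ∫ f dx and m_ν(f,t) = ∫ x^ν f dx − Σ_{ω ≤ ν, ω ≠ ν} m_ω(f,t) ∫ x^ν g_ω(x,t) dx for ν ≠ 0, where g_ω(x,t) = ((-1)^{|ω|}/ω!) ∂_x^ω G(x,t+1). Then for every multi-index ω with |ω| ≤ K and every t ≥ 0, ∫_{ℝ^N} x^ω [ f(x) − Σ_{|ν| ≤ K} m_ν(f,t) g_ν(x,t) ] dx = 0. -/
open Real MeasureTheory ENNReal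

noncomputable def pderiv (N : ℕ) (i : Fin N)
    (f : EuclideanSpace ℝ (Fin N) → ℝ) : EuclideanSpace ℝ (Fin N) → ℝ :=
  fun x => fderiv ℝ f x (EuclideanSpace.single i 1)

noncomputable def mpd (N : ℕ) (ν : Fin N → ℕ)
    (f : EuclideanSpace ℝ (Fin N) → ℝ) : EuclideanSpace ℝ (Fin N) → ℝ :=
  (List.finRange N).foldr (fun i g => (pderiv N i)^[ν i] g) f

noncomputable def gker (N : ℕ) (ν : Fin N → ℕ) (x : EuclideanSpace ℝ (Fin N)) (t : ℝ) : ℝ :=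
  ((-1 : ℝ) ^ (∑ i, ν i) / (∏ i, Nat.factorial (ν i) : ℕ)) *
    mpd N ν (fun y => heatK N y (t + 1)) x

open Filter


namespace Aux12

variable {T : ℝ}

noncomputable def phi (T : ℝ) : ℝ → ℝ := fun s => Real.exp (-s ^ 2 / T)

noncomputable def hh (T : ℝ) (k : ℕ) : ℝ → ℝ := iteratedDeriv k (phi T)

lemma contDiff_phi : ContDiff ℝ (⊤ : ℕ∞) (phi T) := by
  have : ContDiff ℝ (⊤ : ℕ∞) (fun s : ℝ => -s ^ 2 / T) :=
    ((contDiff_id.pow 2).neg).div_const T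
  exact Real.contDiff_exp.comp this

lemma contDiff_hh (k : ℕ) : ContDiff ℝ (⊤ : ℕ∞) (hh T k) := by
  rw [hh, iteratedDeriv_eq_iterate]
  exact ContDiff.iterate_deriv k contDiff_phi

lemma hasDerivAt_hh (k : ℕ) (s : ℝ) : HasDerivAt (hh T k) (hh T (k + 1) s) s := by
  have hdiff : DifferentiableAt ℝ (hh T k) s :=
    ((contDiff_hh k).differentiable (by simp)).differentiableAt
  have : hh T (k + 1) s = deriv (hh T k) s := by
    rw [hh, hh, iteratedDeriv_succ]
  rw [this]
  exact hdiff.hasDerivAt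

lemma hasDerivAt_phi (hT : 0 < T) (s : ℝ) :
    HasDerivAt (phi T) ((-2 * s / T) * phi T s) s := by
  have h1 : HasDerivAt (fun s : ℝ => -s ^ 2 / T) (-2 * s / T) s := by
    have := ((hasDerivAt_pow 2 s).neg).div_const T
    simpa [pow_one] using this.congr_deriv (by ring)
  show HasDerivAt (fun s : ℝ => Real.exp (-s ^ 2 / T)) ((-2 * s / T) * phi T s) s
  simpa [phi, mul_comm] using h1.exp

lemma hh_poly (hT : 0 < T) (k : ℕ) :
    ∃ p : Polynomial ℝ, ∀ s, hh T k s = p.eval s * phi T s := by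
  induction k with
  | zero => exact ⟨1, fun s => by simp [hh, iteratedDeriv_zero]⟩
  | succ k ih =>
    obtain ⟨p, hp⟩ := ih
    refine ⟨p.derivative + p * (Polynomial.C (-2 / T) * Polynomial.X), fun s => ?_⟩
    have h1 : HasDerivAt (hh T k)
        (p.derivative.eval s * phi T s + p.eval s * ((-2 * s / T) * phi T s)) s := by
      have := (p.hasDerivAt s).mul (hasDerivAt_phi hT s)
      exact this.congr_of_eventuallyEq (Filter.Eventually.of_forall fun x => hp x)
    have h2 := hasDerivAt_hh (T := T) k s
    have := h1.unique h2
    rw [← this]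
    simp [Polynomial.eval_mul, Polynomial.eval_add]
    ring

end Aux12

namespace Aux12
open Polynomial in
lemma phi_eq (s : ℝ) : phi T s = Real.exp (-T⁻¹ * s ^ 2) := by
  rw [phi, neg_div, div_eq_mul_inv, mul_comm, neg_mul]

lemma integrable_pow_phi (hT : 0 < T) (n : ℕ) :
    Integrable (fun s : ℝ => s ^ n * phi T s) := by
  have h := integrable_rpow_mul_exp_neg_mul_sq (inv_pos.2 hT)
    (s := (n : ℝ)) (by exact_mod_cast neg_one_lt_zero.trans_le (Nat.cast_nonneg n))
  have : (fun s : ℝ => s ^ n * phi T s)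
      = fun x : ℝ => x ^ (n : ℝ) * Real.exp (-T⁻¹ * x ^ 2) := by
    funext x; rw [Real.rpow_natCast, phi_eq]
  rw [this]; exact h

lemma integrable_poly_phi (hT : 0 < T) (p : Polynomial ℝ) :
    Integrable (fun s : ℝ => p.eval s * phi T s) := by
  have : (fun s : ℝ => p.eval s * phi T s)
      = fun s : ℝ => ∑ k ∈ Finset.range (p.natDegree + 1),
          p.coeff k * (s ^ k * phi T s) := by
    funext s
    rw [Polynomial.eval_eq_sum_range, Finset.sum_mul]
    simp [mul_assoc]
  rw [this]
  exact integrable_finset_sum _ fun k _ => (integrable_pow_phi hT k).const_mul _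

lemma tendsto_pow_phi_atTop (hT : 0 < T) (n : ℕ) :
    Tendsto (fun s : ℝ => s ^ n * phi T s) atTop (nhds 0) := by
  have h := rpow_mul_exp_neg_mul_sq_isLittleO_exp_neg (inv_pos.2 hT) (n : ℝ)
  have h2 : Tendsto (fun x : ℝ => Real.exp (-(1/2) * x)) atTop (nhds 0) := by
    apply Real.tendsto_exp_atBot.comp
    exact Tendsto.const_mul_atTop_of_neg (by norm_num) tendsto_id
  have := h.tendsto_zero_of_tendsto h2
  have he : (fun s : ℝ => s ^ n * phi T s)
      = fun x : ℝ => x ^ (n : ℝ) * Real.exp (-T⁻¹ * x ^ 2) := by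
    funext x; rw [Real.rpow_natCast, phi_eq]
  rw [he]; exact this

lemma tendsto_poly_phi_atTop (hT : 0 < T) (p : Polynomial ℝ) :
    Tendsto (fun s : ℝ => p.eval s * phi T s) atTop (nhds 0) := by
  have : (fun s : ℝ => p.eval s * phi T s)
      = fun s : ℝ => ∑ k ∈ Finset.range (p.natDegree + 1),
          p.coeff k * (s ^ k * phi T s) := by
    funext s
    rw [Polynomial.eval_eq_sum_range, Finset.sum_mul]
    simp [mul_assoc]
  rw [this]
  have : Tendsto (fun s : ℝ => ∑ k ∈ Finset.range (p.natDegree + 1),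
      p.coeff k * (s ^ k * phi T s)) atTop
      (nhds (∑ k ∈ Finset.range (p.natDegree + 1), p.coeff k * 0)) :=
    tendsto_finset_sum _ fun k _ => ((tendsto_pow_phi_atTop hT k).const_mul _)
  simpa using this

lemma tendsto_poly_phi_atBot (hT : 0 < T) (p : Polynomial ℝ) :
    Tendsto (fun s : ℝ => p.eval s * phi T s) atBot (nhds 0) := by
  have h := tendsto_poly_phi_atTop hT (p.comp (-Polynomial.X))
  have h2 := h.comp tendsto_neg_atBot_atTop
  have : (fun s : ℝ => p.eval s * phi T s)
      = (fun s : ℝ => (p.comp (-Polynomial.X)).eval s * phi T s) ∘ Neg.neg := by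
    funext s
    simp [Function.comp, Polynomial.eval_comp, phi]
  rw [this]; exact h2

lemma tendsto_pow_hh_atTop (hT : 0 < T) (a k : ℕ) :
    Tendsto (fun s : ℝ => s ^ a * hh T k s) atTop (nhds 0) := by
  obtain ⟨p, hp⟩ := hh_poly hT k
  have : (fun s : ℝ => s ^ a * hh T k s)
      = fun s : ℝ => (Polynomial.X ^ a * p).eval s * phi T s := by
    funext s; rw [hp]; simp; ring
  rw [this]; exact tendsto_poly_phi_atTop hT _

lemma tendsto_pow_hh_atBot (hT : 0 < T) (a k : ℕ) :
    Tendsto (fun s : ℝ => s ^ a * hh T k s) atBot (nhds 0) := by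
  obtain ⟨p, hp⟩ := hh_poly hT k
  have : (fun s : ℝ => s ^ a * hh T k s)
      = fun s : ℝ => (Polynomial.X ^ a * p).eval s * phi T s := by
    funext s; rw [hp]; simp; ring
  rw [this]; exact tendsto_poly_phi_atBot hT _

lemma integrable_pow_hh (hT : 0 < T) (a k : ℕ) :
    Integrable (fun s : ℝ => s ^ a * hh T k s) := by
  obtain ⟨p, hp⟩ := hh_poly hT k
  have : (fun s : ℝ => s ^ a * hh T k s)
      = fun s : ℝ => (Polynomial.X ^ a * p).eval s * phi T s := by
    funext s; rw [hp]; simp; ring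
  rw [this]; exact integrable_poly_phi hT _

lemma moment_succ_zero (hT : 0 < T) (k : ℕ) : ∫ s : ℝ, hh T (k + 1) s = 0 := by
  have h := integral_of_hasDerivAt_of_tendsto
    (f := hh T k) (f' := hh T (k + 1)) (fun s => hasDerivAt_hh k s)
    (by simpa using integrable_pow_hh hT 0 (k + 1))
    (by simpa using tendsto_pow_hh_atBot hT 0 k)
    (by simpa using tendsto_pow_hh_atTop hT 0 k)
  simpa using h

lemma moment_rec (hT : 0 < T) (a k : ℕ) :
    ∫ s : ℝ, s ^ (a + 1) * hh T (k + 1) s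
      = -((a : ℝ) + 1) * ∫ s : ℝ, s ^ a * hh T k s := by
  have hderiv : ∀ s : ℝ, HasDerivAt (fun s : ℝ => s ^ (a + 1) * hh T k s)
      (((a : ℝ) + 1) * (s ^ a * hh T k s) + s ^ (a + 1) * hh T (k + 1) s) s := by
    intro s
    have := (hasDerivAt_pow (a + 1) s).fun_mul (hasDerivAt_hh (T := T) k s)
    refine this.congr_deriv ?_
    push_cast [Nat.add_sub_cancel]; ring
  have hint1 := (integrable_pow_hh hT a k).const_mul ((a : ℝ) + 1)
  have hint2 := integrable_pow_hh hT (a + 1) (k + 1)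
  have h := integral_of_hasDerivAt_of_tendsto hderiv (hint1.add hint2)
    (tendsto_pow_hh_atBot hT (a + 1) k) (tendsto_pow_hh_atTop hT (a + 1) k)
  rw [sub_zero] at h
  rw [integral_add hint1 hint2, integral_const_mul] at h
  linarith

lemma moment_lt_zero (hT : 0 < T) : ∀ a k : ℕ, a < k → ∫ s : ℝ, s ^ a * hh T k s = 0 := by
  intro a
  induction a with
  | zero =>
    intro k hk
    obtain ⟨k', rfl⟩ := Nat.exists_eq_add_of_lt hk
    simpa using moment_succ_zero hT (0 + k')
  | succ a ih =>
    intro k hk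
    obtain ⟨k', rfl⟩ : ∃ k', k = k' + 1 := ⟨k - 1, by omega⟩
    rw [moment_rec hT a k', ih k' (by omega)]
    ring

lemma moment_diag (hT : 0 < T) : ∀ k : ℕ, ∫ s : ℝ, s ^ k * hh T k s
    = (-1) ^ k * k.factorial * Real.sqrt (π * T) := by
  intro k
  induction k with
  | zero =>
    have : (fun s : ℝ => s ^ 0 * hh T 0 s) = fun s : ℝ => Real.exp (-T⁻¹ * s ^ 2) := by
      funext s; simp [hh, iteratedDeriv_zero, phi_eq]
    rw [this, integral_gaussian, div_inv_eq_mul]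
    simp
  | succ k ih =>
    rw [moment_rec hT k k, ih]
    push_cast [Nat.factorial_succ]
    ring

end Aux12


namespace Aux12

variable {N : ℕ} {T : ℝ}

noncomputable def Fp (N : ℕ) (T : ℝ) (κ : Fin N → ℕ) : EuclideanSpace ℝ (Fin N) → ℝ :=
  fun x => ∏ i, hh T (κ i) (x i)

lemma hasFDerivAt_Fp (κ : Fin N → ℕ) (x : EuclideanSpace ℝ (Fin N)) :
    HasFDerivAt (Fp N T κ)
      (∑ i, (∏ j ∈ Finset.univ.erase i, hh T (κ j) (x j)) •
        (hh T (κ i + 1) (x i) • (EuclideanSpace.proj i : EuclideanSpace ℝ (Fin N) →L[ℝ] ℝ))) x := by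
  apply HasFDerivAt.finset_prod (fun i _ => ?_)
  have hcoe : ⇑(EuclideanSpace.proj i : EuclideanSpace ℝ (Fin N) →L[ℝ] ℝ)
      = fun x : EuclideanSpace ℝ (Fin N) => x i := by funext y; simp
  have hp : HasFDerivAt (fun x : EuclideanSpace ℝ (Fin N) => x i)
      (EuclideanSpace.proj i : EuclideanSpace ℝ (Fin N) →L[ℝ] ℝ) x := by
    have hp' := (EuclideanSpace.proj i : EuclideanSpace ℝ (Fin N) →L[ℝ] ℝ).hasFDerivAt (x := x)
    rwa [hcoe] at hp'
  exact HasDerivAt.comp_hasFDerivAt (𝕜 := ℝ) x (hasDerivAt_hh (κ i) (x i)) hp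

noncomputable def pderiv' (N : ℕ) (i : Fin N)
    (f : EuclideanSpace ℝ (Fin N) → ℝ) : EuclideanSpace ℝ (Fin N) → ℝ :=
  fun x => fderiv ℝ f x (EuclideanSpace.single i 1)

lemma pderiv_Fp (C : ℝ) (κ : Fin N → ℕ) (i : Fin N) :
    pderiv' N i (fun x => C * Fp N T κ x) = fun x => C * Fp N T (κ + Pi.single i 1) x := by
  funext x
  have h := ((hasFDerivAt_Fp (T := T) κ x).const_mul C).fderiv
  rw [pderiv', h]
  simp only [ContinuousLinearMap.coe_smul', Pi.smul_apply, ContinuousLinearMap.coe_sum',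
    Finset.sum_apply, ContinuousLinearMap.smul_apply]
  rw [Finset.sum_eq_single i]
  · have hproj : (EuclideanSpace.proj i : EuclideanSpace ℝ (Fin N) →L[ℝ] ℝ)
        (EuclideanSpace.single i 1) = 1 := by
      simp [EuclideanSpace.proj, EuclideanSpace.single_apply]
    rw [hproj]
    have : Fp N T (κ + Pi.single i 1) x
        = hh T (κ i + 1) (x i) * ∏ j ∈ Finset.univ.erase i, hh T (κ j) (x j) := by
      rw [Fp, ← Finset.mul_prod_erase Finset.univ _ (Finset.mem_univ i)]
      congr 1
      · simp
      · exact Finset.prod_congr rfl fun j hj => by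
          rw [Pi.add_apply, Pi.single_eq_of_ne (Finset.ne_of_mem_erase hj)]; simp
    rw [this]
    simp only [smul_eq_mul, mul_one]
    ring
  · intro j _ hj
    have hproj : (EuclideanSpace.proj j : EuclideanSpace ℝ (Fin N) →L[ℝ] ℝ)
        (EuclideanSpace.single i 1) = 0 := by
      simp [EuclideanSpace.proj, EuclideanSpace.single_apply, hj]
    rw [hproj]; simp
  · simp

lemma pderiv_iter_Fp (C : ℝ) (κ : Fin N → ℕ) (i : Fin N) (m : ℕ) :
    (pderiv' N i)^[m] (fun x => C * Fp N T κ x)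
      = fun x => C * Fp N T (κ + Pi.single i m) x := by
  induction m generalizing κ with
  | zero => simp
  | succ m ih =>
    rw [Function.iterate_succ_apply, pderiv_Fp, ih]
    funext x
    congr 2
    rw [add_assoc, ← Pi.single_add, Nat.add_comm 1 m]

lemma foldr_Fp (C : ℝ) (ν : Fin N → ℕ) (l : List (Fin N)) (κ : Fin N → ℕ) :
    l.foldr (fun i g => (pderiv' N i)^[ν i] g) (fun x => C * Fp N T κ x)
      = fun x => C * Fp N T (κ + (l.map (fun i => Pi.single i (ν i))).sum) x := by
  induction l generalizing κ with
  | nil => simp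
  | cons i l ih =>
    rw [List.foldr_cons, ih, pderiv_iter_Fp]
    funext x
    congr 2
    simp only [List.map_cons, List.sum_cons]
    abel

lemma sum_single_finRange (ν : Fin N → ℕ) :
    ((List.finRange N).map (fun i => Pi.single i (ν i))).sum = ν := by
  have : ∑ i : Fin N, Pi.single i (ν i) = ν := Finset.univ_sum_single ν
  conv_rhs => rw [← this]
  rw [Fin.sum_univ_def]

end Aux12

namespace Aux12

lemma euclidean_integral_prod (u : Fin N → ℝ → ℝ) :
    ∫ x : EuclideanSpace ℝ (Fin N), ∏ i, u i (x i) = ∏ i, ∫ s : ℝ, u i s := by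
  have h := (EuclideanSpace.volume_preserving_symm_measurableEquiv_toLp (Fin N)).symm
  rw [← h.integral_comp (MeasurableEquiv.measurableEmbedding _)]
  have : (fun y : Fin N → ℝ => ∏ i, u i
      (((MeasurableEquiv.toLp 2 (Fin N → ℝ)).symm.symm y) i))
      = fun y : Fin N → ℝ => ∏ i, u i (y i) := by
    funext y
    congr 1
  rw [show (∫ y : Fin N → ℝ, ∏ i, u i (((MeasurableEquiv.toLp 2 (Fin N → ℝ)).symm.symm y) i))
      = ∫ y : Fin N → ℝ, ∏ i, u i (y i) from by rw [this]]
  exact MeasureTheory.integral_fintype_prod_eq_prod u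

lemma euclidean_integrable_prod (u : Fin N → ℝ → ℝ)
    (hu : ∀ i, Integrable (u i)) :
    Integrable (fun x : EuclideanSpace ℝ (Fin N) => ∏ i, u i (x i)) := by
  have h := EuclideanSpace.volume_preserving_symm_measurableEquiv_toLp (Fin N)
  rw [← MeasurePreserving.integrable_comp_emb h.symm
    (MeasurableEquiv.measurableEmbedding _)]
  have : ((fun x : EuclideanSpace ℝ (Fin N) => ∏ i, u i (x i)) ∘
      (MeasurableEquiv.toLp 2 (Fin N → ℝ)).symm.symm)
      = fun y : Fin N → ℝ => ∏ i, u i (y i) := by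
    funext y; rfl
  rw [this]
  exact Integrable.fintype_prod hu

end Aux12

namespace Aux12

lemma pderiv_eq : pderiv = pderiv' := rfl

lemma heatK_eq {t' : ℝ} (x : EuclideanSpace ℝ (Fin N)) :
    heatK N x t' = (4 * π * t') ^ (-(N : ℝ) / 2) * Fp N (4 * t') 0 x := by
  rw [heatK, Fp]
  congr 1
  have hnorm : ‖x‖ ^ 2 = ∑ i, x i ^ 2 := by
    rw [EuclideanSpace.norm_eq]
    rw [Real.sq_sqrt (Finset.sum_nonneg fun i _ => sq_nonneg _)]
    exact Finset.sum_congr rfl fun i _ => by rw [Real.norm_eq_abs, sq_abs]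
  rw [hnorm]
  rw [show (-(∑ i, x i ^ 2) / (4 * t')) = ∑ i, (-(x i) ^ 2 / (4 * t')) by
    rw [← Finset.sum_neg_distrib, Finset.sum_div]]
  rw [Real.exp_sum]
  exact Finset.prod_congr rfl fun i _ => by simp [hh, iteratedDeriv_zero, phi]

lemma mpd_heatK {t' : ℝ} (ν : Fin N → ℕ) :
    mpd N ν (fun y => heatK N y t')
      = fun x => (4 * π * t') ^ (-(N : ℝ) / 2) * Fp N (4 * t') ν x := by
  have h0 : (fun y => heatK N y t')
      = fun x => (4 * π * t') ^ (-(N : ℝ) / 2) * Fp N (4 * t') 0 x := by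
    funext y; exact heatK_eq y
  rw [mpd, pderiv_eq, h0, foldr_Fp, sum_single_finRange, zero_add]

end Aux12

namespace Aux12

section Moments

variable {t : ℝ} (ht : 0 ≤ t)

lemma t1_pos (ht : 0 ≤ t) : (0:ℝ) < 4 * (t + 1) := by linarith

lemma gker_integrand (ω ν : Fin N → ℕ) (x : EuclideanSpace ℝ (Fin N)) :
    (∏ i, x i ^ ω i) * gker N ν x t
      = (((-1 : ℝ) ^ (∑ i, ν i) / (∏ i, Nat.factorial (ν i) : ℕ)) *
          (4 * π * (t + 1)) ^ (-(N : ℝ) / 2)) *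
        ∏ i, (x i ^ ω i * hh (4 * (t + 1)) (ν i) (x i)) := by
  rw [gker, mpd_heatK]
  simp only [Fp]
  rw [Finset.prod_mul_distrib]
  ring

lemma integral_pow_gker (ω ν : Fin N → ℕ) :
    ∫ x : EuclideanSpace ℝ (Fin N), (∏ i, x i ^ ω i) * gker N ν x t
      = (((-1 : ℝ) ^ (∑ i, ν i) / (∏ i, Nat.factorial (ν i) : ℕ)) *
          (4 * π * (t + 1)) ^ (-(N : ℝ) / 2)) *
        ∏ i, ∫ s : ℝ, s ^ ω i * hh (4 * (t + 1)) (ν i) s := by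
  simp_rw [gker_integrand ω ν]
  rw [MeasureTheory.integral_const_mul]
  rw [euclidean_integral_prod (fun i s => s ^ ω i * hh (4 * (t + 1)) (ν i) s)]

lemma integrable_pow_gker (ht : 0 ≤ t) (ω ν : Fin N → ℕ) :
    Integrable (fun x : EuclideanSpace ℝ (Fin N) => (∏ i, x i ^ ω i) * gker N ν x t) := by
  have : (fun x : EuclideanSpace ℝ (Fin N) => (∏ i, x i ^ ω i) * gker N ν x t)
      = fun x => (((-1 : ℝ) ^ (∑ i, ν i) / (∏ i, Nat.factorial (ν i) : ℕ)) *
          (4 * π * (t + 1)) ^ (-(N : ℝ) / 2)) *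
        ∏ i, (x i ^ ω i * hh (4 * (t + 1)) (ν i) (x i)) := by
    funext x; exact gker_integrand ω ν x
  rw [this]
  exact (euclidean_integrable_prod _
    (fun i => integrable_pow_hh (t1_pos ht) (ω i) (ν i))).const_mul _

lemma integral_pow_gker_zero (ht : 0 ≤ t) (ω ν : Fin N → ℕ) (h : ¬ ν ≤ ω) :
    ∫ x : EuclideanSpace ℝ (Fin N), (∏ i, x i ^ ω i) * gker N ν x t = 0 := by
  rw [integral_pow_gker]
  obtain ⟨i, hi⟩ : ∃ i, ω i < ν i := by
    by_contra hc
    push_neg at hc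
    exact h fun i => hc i
  rw [show (∏ i, ∫ s : ℝ, s ^ ω i * hh (4 * (t + 1)) (ν i) s) = 0 from
    Finset.prod_eq_zero (Finset.mem_univ i)
      (moment_lt_zero (t1_pos ht) (ω i) (ν i) hi), mul_zero]

lemma integral_pow_gker_diag (ht : 0 ≤ t) (hN : 1 ≤ N) (ω : Fin N → ℕ) :
    ∫ x : EuclideanSpace ℝ (Fin N), (∏ i, x i ^ ω i) * gker N ω x t = 1 := by
  rw [integral_pow_gker]
  have hA : (0:ℝ) < 4 * π * (t + 1) := by positivity
  have hprod : ∏ i, ∫ s : ℝ, s ^ ω i * hh (4 * (t + 1)) (ω i) s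
      = (-1 : ℝ) ^ (∑ i, ω i) * (∏ i, Nat.factorial (ω i) : ℕ) *
        Real.sqrt (4 * π * (t + 1)) ^ N := by
    have : ∀ i : Fin N, (∫ s : ℝ, s ^ ω i * hh (4 * (t + 1)) (ω i) s)
        = (-1 : ℝ) ^ ω i * (Nat.factorial (ω i)) * Real.sqrt (4 * π * (t + 1)) := by
      intro i
      rw [moment_diag (t1_pos ht) (ω i)]
      congr 2
      ring_nf
    rw [Finset.prod_congr rfl fun i _ => this i]
    rw [Finset.prod_mul_distrib, Finset.prod_mul_distrib]
    rw [Finset.prod_pow_eq_pow_sum, Finset.prod_const]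
    push_cast
    simp
  rw [hprod]
  have hsqrt : Real.sqrt (4 * π * (t + 1)) ^ N
      = (4 * π * (t + 1)) ^ ((N : ℝ) / 2) := by
    rw [Real.sqrt_eq_rpow, ← Real.rpow_natCast ((4 * π * (t + 1)) ^ ((1:ℝ)/2)) N,
      ← Real.rpow_mul hA.le]
    congr 1
    ring
  rw [hsqrt]
  have hC : (4 * π * (t + 1)) ^ (-(N : ℝ) / 2) * (4 * π * (t + 1)) ^ ((N : ℝ) / 2) = 1 := by
    rw [← Real.rpow_add hA, neg_div, neg_add_cancel, Real.rpow_zero]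
  have hfact : ((∏ i, Nat.factorial (ω i) : ℕ) : ℝ) ≠ 0 := by
    have : 0 < ∏ i, Nat.factorial (ω i) := Finset.prod_pos fun i _ => (ω i).factorial_pos
    exact_mod_cast this.ne'
  have hsign : ((-1 : ℝ) ^ (∑ i, ω i)) * ((-1 : ℝ) ^ (∑ i, ω i)) = 1 := by
    rw [← mul_pow]; norm_num
  have key : (-1 : ℝ) ^ (∑ i, ω i) / (∏ i, Nat.factorial (ω i) : ℕ) *
      (4 * π * (t + 1)) ^ (-(N : ℝ) / 2) *
      ((-1 : ℝ) ^ (∑ i, ω i) * (∏ i, Nat.factorial (ω i) : ℕ) *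
        (4 * π * (t + 1)) ^ ((N : ℝ) / 2))
      = (((-1 : ℝ) ^ (∑ i, ω i)) * ((-1 : ℝ) ^ (∑ i, ω i))) *
        ((4 * π * (t + 1)) ^ (-(N : ℝ) / 2) * (4 * π * (t + 1)) ^ ((N : ℝ) / 2)) *
        (((∏ i, Nat.factorial (ω i) : ℕ) : ℝ) / ((∏ i, Nat.factorial (ω i) : ℕ) : ℝ)) := by
    ring
  rw [key, hsign, hC, div_self hfact]
  norm_num

end Moments
end Aux12

namespace Aux12
variable {N : ℕ}

lemma coord_abs_le_norm (x : EuclideanSpace ℝ (Fin N)) (i : Fin N) : |x i| ≤ ‖x‖ := by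
  rw [EuclideanSpace.norm_eq]
  rw [show |x i| = Real.sqrt ((x i) ^ 2) by rw [Real.sqrt_sq_eq_abs]]
  apply Real.sqrt_le_sqrt
  have h := Finset.single_le_sum (f := fun j => ‖x j‖ ^ 2)
    (fun j _ => by positivity) (Finset.mem_univ i)
  simpa [Real.norm_eq_abs, sq_abs] using h

lemma prod_pow_le {K : ℝ} (hK : 0 ≤ K) (ω : Fin N → ℕ)
    (hω : (∑ i, (ω i : ℝ)) ≤ K) (x : EuclideanSpace ℝ (Fin N)) :
    |∏ i, x i ^ ω i| ≤ 1 + ‖x‖ ^ K := by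
  have h1 : |∏ i, x i ^ ω i| ≤ ∏ i, ‖x‖ ^ ω i := by
    rw [Finset.abs_prod]
    apply Finset.prod_le_prod (fun i _ => abs_nonneg _)
    intro i _
    rw [abs_pow]
    exact pow_le_pow_left₀ (abs_nonneg _) (coord_abs_le_norm x i) _
  rw [Finset.prod_pow_eq_pow_sum] at h1
  refine h1.trans ?_
  have hcast : ((∑ i, ω i : ℕ) : ℝ) ≤ K := by push_cast; exact hω
  rcases le_or_gt ‖x‖ 1 with hx | hx
  · have : ‖x‖ ^ (∑ i, ω i) ≤ 1 := pow_le_one₀ (norm_nonneg _) hx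
    have h2 : (0:ℝ) ≤ ‖x‖ ^ K := Real.rpow_nonneg (norm_nonneg _) K
    linarith
  · have : ‖x‖ ^ (∑ i, ω i) = ‖x‖ ^ ((∑ i, ω i : ℕ) : ℝ) := by
      rw [Real.rpow_natCast]
    rw [this]
    have h2 := Real.rpow_le_rpow_of_exponent_le hx.le hcast
    linarith

lemma continuous_prod_pow (ω : Fin N → ℕ) :
    Continuous (fun x : EuclideanSpace ℝ (Fin N) => ∏ i, x i ^ ω i) := by
  apply continuous_finset_prod
  intro i _
  have hcoe : ⇑(EuclideanSpace.proj i : EuclideanSpace ℝ (Fin N) →L[ℝ] ℝ)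
      = fun x : EuclideanSpace ℝ (Fin N) => x i := by funext y; simp
  have : Continuous (fun x : EuclideanSpace ℝ (Fin N) => x i) := by
    rw [← hcoe]; exact (EuclideanSpace.proj i).continuous
  exact this.pow _

lemma integrable_pow_f {K : ℝ} (hK : 0 ≤ K) {f : EuclideanSpace ℝ (Fin N) → ℝ}
    (hf : Integrable (fun x => |f x| * (1 + ‖x‖ ^ K)) volume)
    (hmeas : AEStronglyMeasurable f volume) (ω : Fin N → ℕ)
    (hω : (∑ i, (ω i : ℝ)) ≤ K) :
    Integrable (fun x : EuclideanSpace ℝ (Fin N) => (∏ i, x i ^ ω i) * f x) := by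
  refine Integrable.mono' hf ?_ ?_
  · exact ((continuous_prod_pow ω).aestronglyMeasurable).mul hmeas
  refine Filter.Eventually.of_forall fun x => ?_
  rw [Real.norm_eq_abs, abs_mul]
  calc |∏ i, x i ^ ω i| * |f x| ≤ (1 + ‖x‖ ^ K) * |f x| :=
        mul_le_mul_of_nonneg_right (prod_pow_le hK ω hω x) (abs_nonneg _)
    _ = |f x| * (1 + ‖x‖ ^ K) := mul_comm _ _

lemma ae_prod_pow_ne_zero (ω : Fin N → ℕ) :
    ∀ᵐ x : EuclideanSpace ℝ (Fin N), (∏ i, x i ^ ω i) ≠ 0 := by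
  have hsub : ∀ i : Fin N, volume {x : EuclideanSpace ℝ (Fin N) | x i = 0} = 0 := by
    intro i
    have : {x : EuclideanSpace ℝ (Fin N) | x i = 0}
        = (LinearMap.ker ((EuclideanSpace.proj i :
            EuclideanSpace ℝ (Fin N) →L[ℝ] ℝ) : EuclideanSpace ℝ (Fin N) →ₗ[ℝ] ℝ) :
          Set (EuclideanSpace ℝ (Fin N))) := by
      ext x
      simp [LinearMap.mem_ker]
    rw [this]
    apply Measure.addHaar_submodule
    intro htop
    have h1 : (EuclideanSpace.single i 1 : EuclideanSpace ℝ (Fin N)) ∈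
        LinearMap.ker ((EuclideanSpace.proj i :
          EuclideanSpace ℝ (Fin N) →L[ℝ] ℝ) : EuclideanSpace ℝ (Fin N) →ₗ[ℝ] ℝ) := by
      rw [htop]; trivial
    rw [LinearMap.mem_ker] at h1
    simp [EuclideanSpace.single_apply] at h1
  have : {x : EuclideanSpace ℝ (Fin N) | ¬ (∏ i, x i ^ ω i) ≠ 0}
      ⊆ ⋃ i : Fin N, {x : EuclideanSpace ℝ (Fin N) | x i = 0} := by
    intro x hx
    simp only [Set.mem_setOf_eq, not_not] at hx
    obtain ⟨i, -, hi⟩ := Finset.prod_eq_zero_iff.1 hx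
    exact Set.mem_iUnion.2 ⟨i, pow_eq_zero_iff'.1 hi |>.1⟩
  rw [MeasureTheory.ae_iff]
  exact measure_mono_null this (measure_iUnion_null fun i => hsub i)

lemma aesm_of_prod_mul {f : EuclideanSpace ℝ (Fin N) → ℝ} (ω : Fin N → ℕ)
    (h : AEStronglyMeasurable (fun x : EuclideanSpace ℝ (Fin N) =>
      (∏ i, x i ^ ω i) * f x) volume) :
    AEStronglyMeasurable f volume := by
  have hae := ae_prod_pow_ne_zero (N := N) ω
  have : f =ᵐ[volume] fun x => (∏ i, x i ^ ω i)⁻¹ * ((∏ i, x i ^ ω i) * f x) := by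
    filter_upwards [hae] with x hx
    field_simp
  exact AEStronglyMeasurable.congr (((continuous_prod_pow ω).aemeasurable.inv.mul
    h.aemeasurable).aestronglyMeasurable) this.symm
end Aux12

theorem stmt_12 (N : ℕ) (hN : 1 ≤ N) (K : ℝ) (hK : 0 ≤ K)
    (f : EuclideanSpace ℝ (Fin N) → ℝ)
    (hf : Integrable (fun x => |f x| * (1 + ‖x‖ ^ K)) volume)
    (M : ℝ → (Fin N → ℕ) → ℝ)
    (hM0 : ∀ t : ℝ, M t 0 = ∫ x, f x)
    (hMrec : ∀ t : ℝ, ∀ ν : Fin N → ℕ, ν ≠ 0 →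
      M t ν = (∫ x, (∏ i, x i ^ ν i) * f x) -
        ∑ ω ∈ (Finset.Iic ν).filter (· ≠ ν),
          M t ω * ∫ x, (∏ i, x i ^ ν i) * gker N ω x t) :
    ∀ t ≥ (0:ℝ), ∀ ω : Fin N → ℕ, (∑ i, (ω i : ℝ)) ≤ K →
      (∫ x, (∏ i, x i ^ ω i) *
        (f x - ∑ ν ∈ (Finset.Iic (fun _ => ⌊K⌋₊ : Fin N → ℕ)).filter
            (fun ν => (∑ i, (ν i : ℝ)) ≤ K),
          M t ν * gker N ν x t)) = 0 := by
  intro t ht ω hω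
  classical
  set S : Finset (Fin N → ℕ) := (Finset.Iic (fun _ => ⌊K⌋₊ : Fin N → ℕ)).filter
      (fun ν => (∑ i, (ν i : ℝ)) ≤ K) with hS
  have hint_g : ∀ ν : Fin N → ℕ, Integrable (fun x : EuclideanSpace ℝ (Fin N) =>
      (∏ i, x i ^ ω i) * (M t ν * gker N ν x t)) := by
    intro ν
    have : (fun x : EuclideanSpace ℝ (Fin N) =>
        (∏ i, x i ^ ω i) * (M t ν * gker N ν x t))
        = fun x => M t ν * ((∏ i, x i ^ ω i) * gker N ν x t) := by
      funext x; ring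
    rw [this]
    exact (Aux12.integrable_pow_gker ht ω ν).const_mul _
  have hint_sum : Integrable (fun x : EuclideanSpace ℝ (Fin N) =>
      ∑ ν ∈ S, (∏ i, x i ^ ω i) * (M t ν * gker N ν x t)) :=
    integrable_finset_sum S fun ν _ => hint_g ν
  have hsplit : (fun x : EuclideanSpace ℝ (Fin N) => (∏ i, x i ^ ω i) *
      (f x - ∑ ν ∈ S, M t ν * gker N ν x t))
      = fun x => (∏ i, x i ^ ω i) * f x
          - ∑ ν ∈ S, (∏ i, x i ^ ω i) * (M t ν * gker N ν x t) := by
    funext x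
    rw [mul_sub, Finset.mul_sum]
  by_cases hmeas : AEStronglyMeasurable f volume
  · have hintf : Integrable (fun x : EuclideanSpace ℝ (Fin N) =>
        (∏ i, x i ^ ω i) * f x) := Aux12.integrable_pow_f hK hf hmeas ω hω
    rw [hsplit, integral_sub hintf hint_sum,
      integral_finset_sum S fun ν _ => hint_g ν]
    have hterm : ∀ ν : Fin N → ℕ,
        (∫ x : EuclideanSpace ℝ (Fin N), (∏ i, x i ^ ω i) * (M t ν * gker N ν x t))
          = M t ν * ∫ x : EuclideanSpace ℝ (Fin N), (∏ i, x i ^ ω i) * gker N ν x t := by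
      intro ν
      rw [show (fun x : EuclideanSpace ℝ (Fin N) =>
          (∏ i, x i ^ ω i) * (M t ν * gker N ν x t))
          = fun x => M t ν * ((∏ i, x i ^ ω i) * gker N ν x t) from by funext x; ring]
      exact MeasureTheory.integral_const_mul _ _
    rw [Finset.sum_congr rfl fun ν _ => hterm ν]
    have hωmem : ∀ ν : Fin N → ℕ, ν ≤ ω → ν ∈ S := by
      intro ν hν
      rw [hS, Finset.mem_filter, Finset.mem_Iic]
      constructor
      · intro i
        have h1 : ((ω i : ℝ)) ≤ ∑ j, (ω j : ℝ) :=
          Finset.single_le_sum (f := fun j => (ω j : ℝ))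
            (fun j _ => by positivity) (Finset.mem_univ i)
        have h2 : ((ν i : ℝ)) ≤ K := by
          have := (Nat.cast_le (α := ℝ)).2 (hν i)
          linarith
        exact Nat.le_floor h2
      · refine le_trans ?_ hω
        exact Finset.sum_le_sum fun i _ => (Nat.cast_le (α := ℝ)).2 (hν i)
    have hsplit2 : ∑ ν ∈ S, M t ν * (∫ x : EuclideanSpace ℝ (Fin N),
        (∏ i, x i ^ ω i) * gker N ν x t)
        = ∑ ν ∈ S.filter (fun ν => ν ≤ ω), M t ν * (∫ x : EuclideanSpace ℝ (Fin N),
            (∏ i, x i ^ ω i) * gker N ν x t)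
          + ∑ ν ∈ S.filter (fun ν => ¬ ν ≤ ω), M t ν * (∫ x : EuclideanSpace ℝ (Fin N),
            (∏ i, x i ^ ω i) * gker N ν x t) :=
      (Finset.sum_filter_add_sum_filter_not S _ _).symm
    have hzero : ∑ ν ∈ S.filter (fun ν => ¬ ν ≤ ω), M t ν *
        (∫ x : EuclideanSpace ℝ (Fin N), (∏ i, x i ^ ω i) * gker N ν x t) = 0 :=
      Finset.sum_eq_zero fun ν hν => by
        rw [Aux12.integral_pow_gker_zero ht ω ν (Finset.mem_filter.1 hν).2, mul_zero]
    have hfeq : S.filter (fun ν => ν ≤ ω) = Finset.Iic ω := by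
      ext ν
      simp only [Finset.mem_filter, Finset.mem_Iic]
      exact ⟨fun h => h.2, fun h => ⟨hωmem ν h, h⟩⟩
    have hsingle : (Finset.Iic ω).filter (fun ν => ¬ ν ≠ ω) = {ω} := by
      ext ν
      simp only [Finset.mem_filter, Finset.mem_Iic, not_not, Finset.mem_singleton]
      exact ⟨fun h => h.2, fun h => ⟨h ▸ le_refl ω, h⟩⟩
    have hIic : ∑ ν ∈ Finset.Iic ω, M t ν * (∫ x : EuclideanSpace ℝ (Fin N),
        (∏ i, x i ^ ω i) * gker N ν x t)
        = (∑ ν ∈ (Finset.Iic ω).filter (· ≠ ω), M t ν *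
            (∫ x : EuclideanSpace ℝ (Fin N), (∏ i, x i ^ ω i) * gker N ν x t))
          + M t ω * (∫ x : EuclideanSpace ℝ (Fin N), (∏ i, x i ^ ω i) * gker N ω x t) := by
      rw [← Finset.sum_filter_add_sum_filter_not (Finset.Iic ω) (· ≠ ω), hsingle,
        Finset.sum_singleton]
    have hdiag : (∫ x : EuclideanSpace ℝ (Fin N), (∏ i, x i ^ ω i) * gker N ω x t) = 1 :=
      Aux12.integral_pow_gker_diag ht hN ω
    rw [hsplit2, hzero, add_zero, hfeq, hIic, hdiag, mul_one]
    by_cases hω0 : ω = 0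
    · subst hω0
      have hempty : (Finset.Iic (0 : Fin N → ℕ)).filter (· ≠ (0 : Fin N → ℕ)) = ∅ := by
        ext ν
        simp only [Finset.mem_filter, Finset.mem_Iic, Finset.notMem_empty, iff_false,
          not_and]
        intro h1 h2
        exact h2 (le_antisymm h1 fun i => Nat.zero_le _)
      rw [hempty, Finset.sum_empty, zero_add, hM0 t]
      simp
    · rw [hMrec t ω hω0]
      ring
  · have hnint : ¬ Integrable (fun x : EuclideanSpace ℝ (Fin N) => (∏ i, x i ^ ω i) *
        (f x - ∑ ν ∈ S, M t ν * gker N ν x t)) := by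
      intro hcon
      rw [hsplit] at hcon
      have h2 := hcon.add hint_sum
      have heq : ((fun x : EuclideanSpace ℝ (Fin N) =>
          (∏ i, x i ^ ω i) * f x
            - ∑ ν ∈ S, (∏ i, x i ^ ω i) * (M t ν * gker N ν x t))
          + fun x : EuclideanSpace ℝ (Fin N) =>
            ∑ ν ∈ S, (∏ i, x i ^ ω i) * (M t ν * gker N ν x t))
          = fun x => (∏ i, x i ^ ω i) * f x := by
        funext x; simp only [Pi.add_apply]; ring
      rw [heq] at h2
      exact hmeas (Aux12.aesm_of_prod_mul ω h2.aestronglyMeasurable)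
    exact integral_undef hnint
end
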